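/- Let k be a field, R = k[a, b, c, d, e], R' = k[a, b, c, d] ⊆ R, and let M₁ = R/(a − b, (c − d)(e − d)). Let M₁' be the R'-submodule of M₁ generated by the class of 1, and let M₁'' be the R-submodule of M₁ generated by the class of e − d, regarded as an R'-submodule by restriction of scalars. Then M₁ is the internal direct sum M₁ = M₁' ⊕ M₁'' of R'-submodules. -/

import Mathlib

open MvPolynomial Polynomial

private lemma IIb_smul_mk (k : Type*) [Field k] (I : Ideal (Polynomial (MvPolynomial (Fin 4) k)))
    (q g : Polynomial (MvPolynomial (Fin 4) k)) :
    q • Ideal.Quotient.mk I g = Ideal.Quotient.mk I (q * g) := by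
  rw [← smul_eq_mul]; rfl

private lemma IIb_smul_mk' (k : Type*) [Field k] (I : Ideal (Polynomial (MvPolynomial (Fin 4) k)))
    (r : MvPolynomial (Fin 4) k) (g : Polynomial (MvPolynomial (Fin 4) k)) :
    r • Ideal.Quotient.mk I g = Ideal.Quotient.mk I (Polynomial.C r * g) := by
  rw [← Polynomial.smul_eq_C_mul]; rfl

/-- In `R = k[a, b, c, d, e]`, realized as `(k[a, b, c, d])[e]`
(so `R' = k[a, b, c, d] = MvPolynomial (Fin 4) k` is the base ring,
`a = C (X 0)`, `b = C (X 1)`, `c = C (X 2)`, `d = C (X 3)`, `e = Polynomial.X`),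
let `M₁ = R/(a − b, (c − d)(e − d))`.  Then `M₁` is the internal direct sum of the
`R'`-submodule generated by the class of `1` and the `R`-submodule generated by the
class of `e − d` (viewed as an `R'`-submodule by restriction of scalars). -/
theorem IIb_M1_decomposition (k : Type*) [Field k] :
    ∀ I : Ideal (Polynomial (MvPolynomial (Fin 4) k)),
      I = Ideal.span {(Polynomial.C (X 0) - Polynomial.C (X 1) :
            Polynomial (MvPolynomial (Fin 4) k)),
          (Polynomial.C (X 2) - Polynomial.C (X 3)) *
            (Polynomial.X - Polynomial.C (X 3))} →
      (Submodule.span (MvPolynomial (Fin 4) k)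
          {(1 : Polynomial (MvPolynomial (Fin 4) k) ⧸ I)} ⊔
        Submodule.restrictScalars (MvPolynomial (Fin 4) k)
          (Submodule.span (Polynomial (MvPolynomial (Fin 4) k))
            {Ideal.Quotient.mk I (Polynomial.X - Polynomial.C (X 3))}) = ⊤) ∧
      (Submodule.span (MvPolynomial (Fin 4) k)
          {(1 : Polynomial (MvPolynomial (Fin 4) k) ⧸ I)} ⊓
        Submodule.restrictScalars (MvPolynomial (Fin 4) k)
          (Submodule.span (Polynomial (MvPolynomial (Fin 4) k))
            {Ideal.Quotient.mk I (Polynomial.X - Polynomial.C (X 3))}) = ⊥) := by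
  intro I hI
  have hone : (1 : Polynomial (MvPolynomial (Fin 4) k) ⧸ I) = Ideal.Quotient.mk I 1 := rfl
  constructor
  · -- sup = ⊤
    rw [eq_top_iff]
    rintro x -
    obtain ⟨p, rfl⟩ := Ideal.Quotient.mk_surjective x
    rw [Submodule.mem_sup]
    refine ⟨Ideal.Quotient.mk I (Polynomial.C (p.eval (X 3))), ?_,
      Ideal.Quotient.mk I ((Polynomial.X - Polynomial.C (X 3)) *
        (p /ₘ (Polynomial.X - Polynomial.C (X 3)))), ?_, ?_⟩
    · rw [Submodule.mem_span_singleton]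
      exact ⟨p.eval (X 3), by rw [hone, IIb_smul_mk', mul_one]⟩
    · rw [Submodule.restrictScalars_mem, Submodule.mem_span_singleton]
      exact ⟨p /ₘ (Polynomial.X - Polynomial.C (X 3)), by rw [IIb_smul_mk, mul_comm]⟩
    · rw [← (Ideal.Quotient.mk I).map_add]
      congr 1
      rw [← Polynomial.modByMonic_X_sub_C_eq_C_eval]
      exact Polynomial.modByMonic_add_div p _
  · -- inf = ⊥
    rw [eq_bot_iff]
    intro x hx
    rw [Submodule.mem_inf] at hx
    obtain ⟨hx1, hx2⟩ := hx
    rw [Submodule.mem_span_singleton] at hx1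
    obtain ⟨r, hr⟩ := hx1
    rw [Submodule.restrictScalars_mem, Submodule.mem_span_singleton] at hx2
    obtain ⟨f, hf⟩ := hx2
    have hr' : x = Ideal.Quotient.mk I (Polynomial.C r) := by
      rw [← hr, hone, IIb_smul_mk', mul_one]
    have hf' : x = Ideal.Quotient.mk I (f * (Polynomial.X - Polynomial.C (X 3))) := by
      rw [← hf, IIb_smul_mk]
    have hmem : Polynomial.C r - f * (Polynomial.X - Polynomial.C (X 3)) ∈ I := by
      rw [← Ideal.Quotient.eq_zero_iff_mem, map_sub (Ideal.Quotient.mk I), ← hr', ← hf', sub_self]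
    rw [hI, Ideal.mem_span_pair] at hmem
    obtain ⟨g, h, hgh⟩ := hmem
    -- substitution ψ : X 1 ↦ X 0
    set ψ : MvPolynomial (Fin 4) k →ₐ[k] MvPolynomial (Fin 4) k :=
      MvPolynomial.aeval (fun i => if i = 1 then X 0 else X i) with hψ
    have hψ0 : ψ (X 0) = X 0 := by simp [hψ]
    have hψ1 : ψ (X 1) = X 0 := by simp [hψ]
    have hψ2 : ψ (X 2) = X 2 := by simp [hψ]
    have hψ3 : ψ (X 3) = X 3 := by simp [hψ]
    have hΦeq := congrArg (Polynomial.map ψ.toRingHom) hgh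
    have hev := congrArg (Polynomial.eval (X 3 : MvPolynomial (Fin 4) k)) hΦeq
    have hψr : ψ r = 0 := by
      simpa [hψ0, hψ1, hψ2, hψ3, Polynomial.eval_map, Polynomial.eval₂_sub,
        Polynomial.eval₂_mul] using hev.symm
    have key : ∀ q : MvPolynomial (Fin 4) k,
        Ideal.Quotient.mk (Ideal.span {(X 0 - X 1 : MvPolynomial (Fin 4) k)}) (ψ q) =
        Ideal.Quotient.mk (Ideal.span {(X 0 - X 1 : MvPolynomial (Fin 4) k)}) q := by
      intro q
      have h2 : (Ideal.Quotient.mk (Ideal.span {(X 0 - X 1 : MvPolynomial (Fin 4) k)})).comp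
          ψ.toRingHom = Ideal.Quotient.mk (Ideal.span {(X 0 - X 1 : MvPolynomial (Fin 4) k)}) := by
        apply MvPolynomial.ringHom_ext
        · intro a
          simp [hψ]
        · intro i
          simp only [RingHom.comp_apply, AlgHom.toRingHom_eq_coe, RingHom.coe_coe, hψ,
            MvPolynomial.aeval_X]
          by_cases h1 : i = 1
          · subst h1
            rw [if_pos rfl, Ideal.Quotient.eq]
            exact Ideal.subset_span rfl
          · rw [if_neg h1]
      exact congrFun (congrArg DFunLike.coe h2) q
    have hrmem : r ∈ Ideal.span {(X 0 - X 1 : MvPolynomial (Fin 4) k)} := by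
      rw [← Ideal.Quotient.eq_zero_iff_mem, ← key r, hψr, map_zero]
    rw [Ideal.mem_span_singleton] at hrmem
    obtain ⟨t, ht⟩ := hrmem
    have hCr : Polynomial.C r ∈ I := by
      rw [ht, hI, map_mul]
      refine Ideal.mul_mem_right _ _ (Ideal.subset_span ?_)
      rw [map_sub]
      exact Or.inl rfl
    rw [Submodule.mem_bot, hr', Ideal.Quotient.eq_zero_iff_mem]
    exact hCr
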